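/- Let n = 2 and θ_2 = 0, apply Procedure 2 (both critical constants equal to α), and suppose T_1 and T_2 are independent. Then mdFWER = α + F_{θ_1}(c_1) − α·F_{θ_1}(c_2) when θ_1 > 0, and mdFWER = 1 + α·F_{θ_1}(c_1) − F_{θ_1}(c_2) when θ_1 < 0. -/

import Mathlib

open MeasureTheory ProbabilityTheory

/-- If T has continuous cdf G, then Pr{T < x} = G x. -/
lemma aux_meas_lt {Ω : Type*} [MeasurableSpace Ω] (Pr : Measure Ω) [IsProbabilityMeasure Pr]
    (T : Ω → ℝ) (G : ℝ → ℝ) (hG : Continuous G)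
    (hcdf : ∀ x : ℝ, (Pr {ω | T ω ≤ x}).toReal = G x) (x : ℝ) :
    (Pr {ω | T ω < x}).toReal = G x := by
  have hset : {ω | T ω < x} = ⋃ n : ℕ, {ω | T ω ≤ x - 1 / (n + 1)} := by
    ext ω
    simp only [Set.mem_setOf_eq, Set.mem_iUnion]
    constructor
    · intro h
      obtain ⟨n, hn⟩ := exists_nat_one_div_lt (sub_pos.mpr h)
      exact ⟨n, by linarith⟩
    · rintro ⟨n, hn⟩
      have h0 : (0 : ℝ) < 1 / (n + 1) := by positivity
      linarith
  have hmono : Monotone (fun n : ℕ => {ω | T ω ≤ x - 1 / (n + 1)}) := by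
    intro n m hnm ω hω
    simp only [Set.mem_setOf_eq] at *
    have h1 : (1 : ℝ) / (m + 1) ≤ 1 / (n + 1) := by
      apply one_div_le_one_div_of_le (by positivity)
      have : (n : ℝ) ≤ m := Nat.cast_le.mpr hnm
      linarith
    linarith
  have h1 := tendsto_measure_iUnion_atTop (μ := Pr) hmono
  rw [← hset] at h1
  have h2 : Filter.Tendsto (fun n : ℕ => (Pr {ω | T ω ≤ x - 1 / (n + 1)}).toReal)
      Filter.atTop (nhds ((Pr {ω | T ω < x}).toReal)) :=
    (ENNReal.tendsto_toReal (measure_ne_top _ _)).comp h1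
  have h3 : Filter.Tendsto (fun n : ℕ => G (x - 1 / (n + 1))) Filter.atTop (nhds (G x)) := by
    apply (hG.tendsto x).comp
    have : Filter.Tendsto (fun n : ℕ => 1 / ((n : ℝ) + 1)) Filter.atTop (nhds 0) :=
      tendsto_one_div_add_atTop_nhds_zero_nat
    have h4 : Filter.Tendsto (fun n : ℕ => x - 1 / ((n : ℝ) + 1)) Filter.atTop (nhds (x - 0)) :=
      Filter.Tendsto.const_sub x this
    simpa using h4
  have heq : (fun n : ℕ => (Pr {ω | T ω ≤ x - 1 / (n + 1)}).toReal)
      = fun n : ℕ => G (x - 1 / (n + 1)) := by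
    funext n; exact hcdf _
  rw [heq] at h2
  exact tendsto_nhds_unique h2 h3

/-- Pr{c ≤ T} = 1 - G c for continuous cdf G. -/
lemma aux_meas_ge {Ω : Type*} [MeasurableSpace Ω] (Pr : Measure Ω) [IsProbabilityMeasure Pr]
    (T : Ω → ℝ) (hT : Measurable T) (G : ℝ → ℝ) (hG : Continuous G)
    (hcdf : ∀ x : ℝ, (Pr {ω | T ω ≤ x}).toReal = G x) (c : ℝ) :
    (Pr {ω | c ≤ T ω}).toReal = 1 - G c := by
  have hset : {ω | c ≤ T ω} = {ω | T ω < c}ᶜ := by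
    ext ω; simp [not_lt]
  have hm : MeasurableSet {ω | T ω < c} := hT measurableSet_Iio
  rw [hset, measure_compl hm (measure_ne_top _ _), measure_univ]
  rw [ENNReal.toReal_sub_of_le prob_le_one ENNReal.one_ne_top, ENNReal.toReal_one,
    aux_meas_lt Pr T G hG hcdf c]

lemma aux_union_calc {Ω : Type*} [MeasurableSpace Ω] (Pr : Measure Ω) [IsProbabilityMeasure Pr]
    (T₁ T₂ : Ω → ℝ) (hT₁ : Measurable T₁) (hT₂ : Measurable T₂) (hindep : IndepFun T₁ T₂ Pr)
    (s t u : Set ℝ) (hs : MeasurableSet s) (ht : MeasurableSet t) (hu : MeasurableSet u)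
    (hst : Disjoint s t) :
    (Pr (T₁ ⁻¹' s ∪ (T₁ ⁻¹' t ∩ T₂ ⁻¹' u))).toReal
      = (Pr (T₁ ⁻¹' s)).toReal + (Pr (T₁ ⁻¹' t)).toReal * (Pr (T₂ ⁻¹' u)).toReal := by
  have hdisj : Disjoint (T₁ ⁻¹' s) (T₁ ⁻¹' t ∩ T₂ ⁻¹' u) := by
    apply Set.disjoint_left.mpr
    intro ω h1 h2
    exact Set.disjoint_left.mp hst h1 h2.1
  rw [measure_union hdisj ((ht.preimage hT₁).inter (hu.preimage hT₂)),
    hindep.measure_inter_preimage_eq_mul t u ht hu,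
    ENNReal.toReal_add (measure_ne_top _ _)
      (ENNReal.mul_ne_top (measure_ne_top _ _) (measure_ne_top _ _)),
    ENNReal.toReal_mul]

lemma aux_fin2 (P : Fin 2 → Prop) (Q : Fin 2 → Prop) :
    (∃ i : Fin 2, (∀ j, j ≤ i → P j) ∧ Q i) ↔ ((P 0 ∧ Q 0) ∨ (P 0 ∧ P 1 ∧ Q 1)) := by
  constructor
  · rintro ⟨i, h1, h2⟩
    fin_cases i
    · exact Or.inl ⟨h1 0 le_rfl, h2⟩
    · exact Or.inr ⟨h1 0 (by decide), h1 1 le_rfl, h2⟩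
  · rintro (⟨h1, h2⟩ | ⟨h1, h2, h3⟩)
    · refine ⟨0, fun j hj => ?_, h2⟩
      have : j = 0 := le_antisymm hj (Fin.zero_le j)
      rw [this]; exact h1
    · refine ⟨1, fun j hj => ?_, h3⟩
      fin_cases j
      exacts [h1, h2]

/-- Exact expression for the mdFWER of Procedure 2 (n = 2, θ₂ = 0)
when T₁ and T₂ are independent. -/
theorem mdFWER_two_hypotheses_expression_indep
    {Ω : Type*} [MeasurableSpace Ω] (Pr : Measure Ω) [IsProbabilityMeasure Pr]
    (F : ℝ → ℝ → ℝ)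
    (hFcont : ∀ θ, Continuous (F θ))
    (hFmono : ∀ θ, Monotone (F θ))
    (hF0strict : StrictMono (F 0))
    (hFsym : ∀ x : ℝ, F 0 (-x) = 1 - F 0 x)
    (hstoch : ∀ θ θ' : ℝ, θ ≤ θ' → ∀ x, F θ' x ≤ F θ x)
    (θ₁ : ℝ) (T₁ T₂ : Ω → ℝ) (hT₁ : Measurable T₁) (hT₂ : Measurable T₂)
    (hcdf₁ : ∀ x : ℝ, (Pr {ω | T₁ ω ≤ x}).toReal = F θ₁ x)
    (hcdf₂ : ∀ x : ℝ, (Pr {ω | T₂ ω ≤ x}).toReal = F 0 x)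
    (hindep : IndepFun T₁ T₂ Pr)
    (α : ℝ) (hα : α ∈ Set.Ioo (0 : ℝ) 1)
    (c₁ c₂ : ℝ) (hc₁ : F 0 c₁ = α / 2) (hc₂ : F 0 c₂ = 1 - α / 2)
    -- mdFWER of the directional fixed sequence procedure with both critical constants α
    (mdFWER : ℝ)
    (hmd : mdFWER = (Pr {ω | ∃ i : Fin 2,
        (∀ j : Fin 2, j ≤ i →
          2 * min (F 0 ((![T₁, T₂] j) ω)) (1 - F 0 ((![T₁, T₂] j) ω)) ≤ α) ∧
        ((![θ₁, 0] i : ℝ) = 0 ∨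
          ((![θ₁, 0] i : ℝ) ≠ 0 ∧ (![θ₁, 0] i : ℝ) * (![T₁, T₂] i) ω < 0))}).toReal) :
    (0 < θ₁ → mdFWER = α + F θ₁ c₁ - α * F θ₁ c₂) ∧
    (θ₁ < 0 → mdFWER = 1 + α * F θ₁ c₁ - F θ₁ c₂) := by
  obtain ⟨hα0, hα1⟩ := hα
  have hF00 : F 0 0 = 1 / 2 := by
    have h := hFsym 0
    rw [neg_zero] at h
    linarith
  have hc₁0 : c₁ < 0 := by
    have : F 0 c₁ < F 0 0 := by rw [hc₁, hF00]; linarith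
    exact hF0strict.lt_iff_lt.mp this
  have hc₂0 : 0 < c₂ := by
    have : F 0 0 < F 0 c₂ := by rw [hc₂, hF00]; linarith
    exact hF0strict.lt_iff_lt.mp this
  -- rejection characterization
  have hR : ∀ t : ℝ, (2 * min (F 0 t) (1 - F 0 t) ≤ α ↔ t ≤ c₁ ∨ c₂ ≤ t) := by
    intro t
    have h1 : F 0 t ≤ F 0 c₁ ↔ t ≤ c₁ := hF0strict.le_iff_le
    have h2 : F 0 c₂ ≤ F 0 t ↔ c₂ ≤ t := hF0strict.le_iff_le
    rw [hc₁] at h1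
    rw [hc₂] at h2
    constructor
    · intro h
      rcases min_le_iff.mp (by linarith : min (F 0 t) (1 - F 0 t) ≤ α / 2) with h' | h'
      · exact Or.inl (h1.mp h')
      · exact Or.inr (h2.mp (by linarith))
    · rintro (h | h)
      · have h' := h1.mpr h
        have hm : min (F 0 t) (1 - F 0 t) ≤ F 0 t := min_le_left _ _
        linarith
      · have h' := h2.mpr h
        have hm : min (F 0 t) (1 - F 0 t) ≤ 1 - F 0 t := min_le_right _ _
        linarith
  -- measures of basic sets
  have hA1 : ∀ x : ℝ, (Pr (T₁ ⁻¹' Set.Iic x)).toReal = F θ₁ x := fun x => hcdf₁ x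
  have hB1 : ∀ x : ℝ, (Pr (T₁ ⁻¹' Set.Ici x)).toReal = 1 - F θ₁ x := fun x =>
    aux_meas_ge Pr T₁ hT₁ (F θ₁) (hFcont θ₁) hcdf₁ x
  have hU : (Pr (T₂ ⁻¹' (Set.Iic c₁ ∪ Set.Ici c₂))).toReal = α := by
    have hdisj : Disjoint (T₂ ⁻¹' Set.Iic c₁) (T₂ ⁻¹' Set.Ici c₂) := by
      apply Set.disjoint_left.mpr
      intro ω h1 h2
      simp only [Set.mem_preimage, Set.mem_Iic, Set.mem_Ici] at h1 h2
      linarith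
    rw [Set.preimage_union,
      measure_union hdisj (measurableSet_Ici.preimage hT₂),
      ENNReal.toReal_add (measure_ne_top _ _) (measure_ne_top _ _)]
    have e1 : (Pr (T₂ ⁻¹' Set.Iic c₁)).toReal = F 0 c₁ := hcdf₂ c₁
    have e2 : (Pr (T₂ ⁻¹' Set.Ici c₂)).toReal = 1 - F 0 c₂ :=
      aux_meas_ge Pr T₂ hT₂ (F 0) (hFcont 0) hcdf₂ c₂
    rw [e1, e2, hc₁, hc₂]
    ring
  have hUm : MeasurableSet (Set.Iic c₁ ∪ Set.Ici c₂) :=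
    measurableSet_Iic.union measurableSet_Ici
  constructor
  · -- θ₁ > 0
    intro hθ
    have hmul : ∀ t : ℝ, (θ₁ * t < 0 ↔ t < 0) := by
      intro t
      constructor
      · intro h; nlinarith
      · intro h; exact mul_neg_of_pos_of_neg hθ h
    have hE : {ω | ∃ i : Fin 2,
        (∀ j : Fin 2, j ≤ i →
          2 * min (F 0 ((![T₁, T₂] j) ω)) (1 - F 0 ((![T₁, T₂] j) ω)) ≤ α) ∧
        ((![θ₁, 0] i : ℝ) = 0 ∨
          ((![θ₁, 0] i : ℝ) ≠ 0 ∧ (![θ₁, 0] i : ℝ) * (![T₁, T₂] i) ω < 0))}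
        = T₁ ⁻¹' Set.Iic c₁ ∪ (T₁ ⁻¹' Set.Ici c₂ ∩ T₂ ⁻¹' (Set.Iic c₁ ∪ Set.Ici c₂)) := by
      ext ω
      simp only [Set.mem_setOf_eq, Set.mem_union, Set.mem_preimage, Set.mem_inter_iff,
        Set.mem_Iic, Set.mem_Ici]
      rw [aux_fin2]
      simp only [Matrix.cons_val_zero, Matrix.cons_val_one, Matrix.head_cons]
      rw [hR (T₁ ω), hR (T₂ ω), hmul (T₁ ω)]
      constructor
      · rintro (⟨hr, h0 | ⟨_, hneg⟩⟩ | ⟨hr1, hr2, _⟩)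
        · exact absurd h0 hθ.ne'
        · rcases hr with h | h
          · exact Or.inl h
          · linarith
        · rcases hr1 with h | h
          · exact Or.inl h
          · exact Or.inr ⟨h, hr2⟩
      · rintro (h | ⟨h1, h2⟩)
        · exact Or.inl ⟨Or.inl h, Or.inr ⟨hθ.ne', by linarith⟩⟩
        · exact Or.inr ⟨Or.inr h1, h2, Or.inl trivial⟩
    rw [hmd, hE, aux_union_calc Pr T₁ T₂ hT₁ hT₂ hindep _ _ _ measurableSet_Iic
      measurableSet_Ici hUm (by
        apply Set.disjoint_left.mpr
        intro x h1 h2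
        simp only [Set.mem_Iic] at h1
        simp only [Set.mem_Ici] at h2
        linarith),
      hA1, hB1, hU]
    ring
  · -- θ₁ < 0
    intro hθ
    have hmul : ∀ t : ℝ, (θ₁ * t < 0 ↔ 0 < t) := by
      intro t
      constructor
      · intro h; nlinarith
      · intro h; exact mul_neg_of_neg_of_pos hθ h
    have hE : {ω | ∃ i : Fin 2,
        (∀ j : Fin 2, j ≤ i →
          2 * min (F 0 ((![T₁, T₂] j) ω)) (1 - F 0 ((![T₁, T₂] j) ω)) ≤ α) ∧
        ((![θ₁, 0] i : ℝ) = 0 ∨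
          ((![θ₁, 0] i : ℝ) ≠ 0 ∧ (![θ₁, 0] i : ℝ) * (![T₁, T₂] i) ω < 0))}
        = T₁ ⁻¹' Set.Ici c₂ ∪ (T₁ ⁻¹' Set.Iic c₁ ∩ T₂ ⁻¹' (Set.Iic c₁ ∪ Set.Ici c₂)) := by
      ext ω
      simp only [Set.mem_setOf_eq, Set.mem_union, Set.mem_preimage, Set.mem_inter_iff,
        Set.mem_Iic, Set.mem_Ici]
      rw [aux_fin2]
      simp only [Matrix.cons_val_zero, Matrix.cons_val_one, Matrix.head_cons]
      rw [hR (T₁ ω), hR (T₂ ω), hmul (T₁ ω)]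
      constructor
      · rintro (⟨hr, h0 | ⟨_, hpos⟩⟩ | ⟨hr1, hr2, _⟩)
        · exact absurd h0 hθ.ne
        · rcases hr with h | h
          · linarith
          · exact Or.inl h
        · rcases hr1 with h | h
          · exact Or.inr ⟨h, hr2⟩
          · exact Or.inl h
      · rintro (h | ⟨h1, h2⟩)
        · exact Or.inl ⟨Or.inr h, Or.inr ⟨hθ.ne, by linarith⟩⟩
        · exact Or.inr ⟨Or.inl h1, h2, Or.inl trivial⟩
    rw [hmd, hE, aux_union_calc Pr T₁ T₂ hT₁ hT₂ hindep _ _ _ measurableSet_Ici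
      measurableSet_Iic hUm (by
        apply Set.disjoint_left.mpr
        intro x h1 h2
        simp only [Set.mem_Ici] at h1
        simp only [Set.mem_Iic] at h2
        linarith),
      hB1, hA1, hU]
    ring
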